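/- Let ν = Σ_{i=1}^N α_i δ_{x_i} be a probability measure with α_i > 0, Σα_i = 1, x_i distinct, and μ a Borel probability measure on S. Then ‖ν − μ‖*_FM equals the supremum of ∫ h_θ d(ν−μ) over θ ∈ [−1,1]^N with max_i θ_i = 1, where h_θ(x) = max(−1, max_i(θ_i − d(x_i,x))). -/

import Mathlib

open MeasureTheory

lemma lipschitzWith_sup' {S : Type*} [MetricSpace S] {ι : Type*} (s : Finset ι)
    (hs : s.Nonempty) (f : ι → S → ℝ) (h : ∀ i ∈ s, LipschitzWith 1 (f i)) :
    LipschitzWith 1 (fun y => s.sup' hs (fun i => f i y)) := by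
  apply LipschitzWith.of_dist_le_mul
  intro y z
  rw [NNReal.coe_one, one_mul, Real.dist_eq, abs_sub_le_iff]
  have key : ∀ y z : S, s.sup' hs (fun i => f i y) - s.sup' hs (fun i => f i z) ≤ dist y z := by
    intro y z
    rw [sub_le_iff_le_add]
    apply Finset.sup'_le
    intro i hi
    have h1 : f i y - f i z ≤ dist y z := by
      have := (h i hi).dist_le_mul y z
      rw [NNReal.coe_one, one_mul, Real.dist_eq] at this
      linarith [abs_le.mp this]
    have h2 : f i z ≤ s.sup' hs (fun i => f i z) := Finset.le_sup' (fun i => f i z) hi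
    linarith
  exact ⟨key y z, by simpa [dist_comm] using key z y⟩

/-- Proposition 2.2 (probability measures, max θ_i = 1). -/
theorem stmt_4 {S : Type*} [MetricSpace S] [MeasurableSpace S] [BorelSpace S]
    {N : ℕ} (hN : 0 < N) (x : Fin N → S) (hx : Function.Injective x)
    (α : Fin N → ℝ) (hα : ∀ i, 0 < α i) (hsum : ∑ i, α i = 1)
    (μ : Measure S) [IsProbabilityMeasure μ] :
    let ν : Measure S := ∑ i, ENNReal.ofReal (α i) • Measure.dirac (x i)
    let hθ : (Fin N → ℝ) → S → ℝ := fun θ y =>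
      max (-1) (Finset.univ.sup' ⟨⟨0, hN⟩, Finset.mem_univ _⟩
        (fun i => θ i - dist (x i) y))
    sSup {r : ℝ | ∃ f : S → ℝ, LipschitzWith 1 f ∧ (∀ y, |f y| ≤ 1) ∧
        r = ∫ y, f y ∂ν - ∫ y, f y ∂μ}
      = sSup {r : ℝ | ∃ θ : Fin N → ℝ, (∀ i, θ i ∈ Set.Icc (-1 : ℝ) 1) ∧
        Finset.univ.sup' ⟨⟨0, hN⟩, Finset.mem_univ _⟩ θ = 1 ∧
        r = ∫ y, hθ θ y ∂ν - ∫ y, hθ θ y ∂μ} := by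
  intro ν hθ
  have ne : (Finset.univ : Finset (Fin N)).Nonempty := ⟨⟨0, hN⟩, Finset.mem_univ _⟩
  -- integrability of bounded continuous functions w.r.t. any finite measure
  have int_of : ∀ (g : S → ℝ) (m : Measure S), IsFiniteMeasure m → Continuous g →
      (∀ y, |g y| ≤ 1) → Integrable g m := by
    intro g m hm hg hb
    exact (integrable_const (1 : ℝ)).mono' hg.aestronglyMeasurable
      (Filter.Eventually.of_forall fun y => by simpa [Real.norm_eq_abs] using hb y)
  -- integral against ν is a finite sum
  have key : ∀ g : S → ℝ, Continuous g → (∀ y, |g y| ≤ 1) →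
      ∫ y, g y ∂ν = ∑ i, α i * g (x i) := by
    intro g hg hb
    rw [show ν = ∑ i, ENNReal.ofReal (α i) • Measure.dirac (x i) from rfl,
      integral_finset_sum_measure (fun i _ =>
        ((int_of g (Measure.dirac (x i)) inferInstance hg hb).smul_measure
          ENNReal.ofReal_ne_top))]
    refine Finset.sum_congr rfl fun i _ => ?_
    rw [integral_smul_measure, integral_dirac, smul_eq_mul,
      ENNReal.toReal_ofReal (hα i).le]
  -- properties of hθ
  have hθ_lip : ∀ θ : Fin N → ℝ, LipschitzWith 1 (hθ θ) := by
    intro θ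
    exact (lipschitzWith_sup' Finset.univ ne (fun i y => θ i - dist (x i) y)
      (fun i _ => by
        apply LipschitzWith.of_dist_le_mul
        intro y z
        simp only [NNReal.coe_one, one_mul, Real.dist_eq, dist_comm (x i)]
        have h := abs_dist_sub_le y z (x i)
        rw [show θ i - dist y (x i) - (θ i - dist z (x i))
            = -(dist y (x i) - dist z (x i)) from by ring, abs_neg]
        exact h)).const_max (-1)
  have hθ_bd : ∀ θ : Fin N → ℝ, (∀ i, θ i ∈ Set.Icc (-1 : ℝ) 1) → ∀ y, |hθ θ y| ≤ 1 := by
    intro θ hmem y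
    rw [abs_le]
    constructor
    · exact le_trans (by norm_num) (le_max_left _ _)
    · refine max_le (by norm_num) (Finset.sup'_le _ _ fun i _ => ?_)
      have := (hmem i).2
      have := dist_nonneg (x := x i) (y := y)
      linarith
  -- bound on elements of the LHS set
  have bound : ∀ (f : S → ℝ), LipschitzWith 1 f → (∀ y, |f y| ≤ 1) →
      ∫ y, f y ∂ν - ∫ y, f y ∂μ ≤ 2 := by
    intro f hf hb
    have h1 : ∫ y, f y ∂ν ≤ 1 := by
      rw [key f hf.continuous hb, ← hsum]
      exact Finset.sum_le_sum fun i _ => by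
        nlinarith [(hα i).le, abs_le.mp (hb (x i))]
    have h2 : -1 ≤ ∫ y, f y ∂μ := by
      have := norm_integral_le_of_norm_le_const (μ := μ) (f := f) (C := 1)
        (Filter.Eventually.of_forall fun y => by simpa [Real.norm_eq_abs] using hb y)
      simp only [probReal_univ, ENNReal.toReal_one, mul_one, Real.norm_eq_abs] at this
      linarith [abs_le.mp this]
    linarith
  have hBsubA : {r : ℝ | ∃ θ : Fin N → ℝ, (∀ i, θ i ∈ Set.Icc (-1 : ℝ) 1) ∧
        Finset.univ.sup' ne θ = 1 ∧
        r = ∫ y, hθ θ y ∂ν - ∫ y, hθ θ y ∂μ} ⊆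
      {r : ℝ | ∃ f : S → ℝ, LipschitzWith 1 f ∧ (∀ y, |f y| ≤ 1) ∧
        r = ∫ y, f y ∂ν - ∫ y, f y ∂μ} := by
    rintro r ⟨θ, hmem, -, hr⟩
    exact ⟨hθ θ, hθ_lip θ, hθ_bd θ hmem, hr⟩
  have hAbdd : BddAbove {r : ℝ | ∃ f : S → ℝ, LipschitzWith 1 f ∧ (∀ y, |f y| ≤ 1) ∧
      r = ∫ y, f y ∂ν - ∫ y, f y ∂μ} := by
    refine ⟨2, ?_⟩
    rintro r ⟨f, hf, hb, rfl⟩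
    exact bound f hf hb
  have hBne : {r : ℝ | ∃ θ : Fin N → ℝ, (∀ i, θ i ∈ Set.Icc (-1 : ℝ) 1) ∧
      Finset.univ.sup' ne θ = 1 ∧
      r = ∫ y, hθ θ y ∂ν - ∫ y, hθ θ y ∂μ}.Nonempty := by
    refine ⟨_, fun _ => 1, fun i => ⟨by norm_num, le_refl _⟩, Finset.sup'_const ne _, rfl⟩
  refine le_antisymm ?_ (csSup_le_csSup hAbdd hBne hBsubA)
  refine csSup_le (hBne.mono hBsubA) ?_
  rintro r ⟨f, hf, hb, rfl⟩
  -- construct θ'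
  set M : ℝ := Finset.univ.sup' ne (fun i => f (x i)) with hM
  set c : ℝ := 1 - M with hc
  have hM1 : M ≤ 1 := Finset.sup'_le _ _ fun i _ => (abs_le.mp (hb (x i))).2
  have hc0 : 0 ≤ c := by simp [hc]; linarith
  set θ' : Fin N → ℝ := fun i => f (x i) + c with hθ'
  have hθ'mem : ∀ i, θ' i ∈ Set.Icc (-1 : ℝ) 1 := by
    intro i
    have h1 : f (x i) ≤ M := Finset.le_sup' (fun i => f (x i)) (Finset.mem_univ i)
    have := abs_le.mp (hb (x i))
    constructor
    · simp only [hθ']; linarith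
    · simp only [hθ', hc]; linarith
  have hθ'sup : Finset.univ.sup' ne θ' = 1 := by
    obtain ⟨i₀, -, hi₀⟩ := Finset.exists_mem_eq_sup' ne (fun i => f (x i))
    apply le_antisymm
    · exact Finset.sup'_le _ _ fun i _ => (hθ'mem i).2
    · have : θ' i₀ = 1 := by simp only [hθ', hc, ← hi₀]; ring
      rw [← this]
      exact Finset.le_sup' θ' (Finset.mem_univ i₀)
  -- pointwise: hθ θ' ≤ f + c
  have hle : ∀ y, hθ θ' y ≤ f y + c := by
    intro y
    have hfy := abs_le.mp (hb y)
    refine max_le (by linarith) (Finset.sup'_le _ _ fun i _ => ?_)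
    have := hf.dist_le_mul (x i) y
    rw [NNReal.coe_one, one_mul, Real.dist_eq] at this
    have h1 : f (x i) - f y ≤ dist (x i) y := by linarith [abs_le.mp this]
    simp only [hθ']
    linarith
  -- at atoms: hθ θ' (x j) ≥ f (x j) + c
  have hge : ∀ j, f (x j) + c ≤ hθ θ' (x j) := by
    intro j
    refine le_trans ?_ (le_max_right _ _)
    have : θ' j - dist (x j) (x j) ≤ Finset.univ.sup' ne (fun i => θ' i - dist (x i) (x j)) :=
      Finset.le_sup' (fun i => θ' i - dist (x i) (x j)) (Finset.mem_univ j)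
    simpa only [hθ', dist_self, sub_zero] using this
  -- compare integrals
  have intν_f : ∫ y, f y ∂ν = ∑ i, α i * f (x i) := key f hf.continuous hb
  have intν_h : ∫ y, hθ θ' y ∂ν = ∑ i, α i * hθ θ' (x i) :=
    key (hθ θ') (hθ_lip θ').continuous (hθ_bd θ' hθ'mem)
  have hν : ∫ y, f y ∂ν + c ≤ ∫ y, hθ θ' y ∂ν := by
    rw [intν_f, intν_h]
    calc (∑ i, α i * f (x i)) + c = ∑ i, α i * (f (x i) + c) := by
          simp [mul_add, Finset.sum_add_distrib, ← Finset.sum_mul, hsum]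
      _ ≤ ∑ i, α i * hθ θ' (x i) :=
          Finset.sum_le_sum fun i _ => mul_le_mul_of_nonneg_left (hge i) (hα i).le
  have hμ : ∫ y, hθ θ' y ∂μ ≤ ∫ y, f y ∂μ + c := by
    have h1 : Integrable (hθ θ') μ :=
      int_of _ μ inferInstance (hθ_lip θ').continuous (hθ_bd θ' hθ'mem)
    have h2 : Integrable f μ := int_of _ μ inferInstance hf.continuous hb
    calc ∫ y, hθ θ' y ∂μ ≤ ∫ y, (f y + c) ∂μ :=
          integral_mono h1 (h2.add (integrable_const c)) hle
      _ = ∫ y, f y ∂μ + c := by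
          rw [integral_add h2 (integrable_const c), integral_const, probReal_univ]
          simp
  have hrle : ∫ y, f y ∂ν - ∫ y, f y ∂μ ≤ ∫ y, hθ θ' y ∂ν - ∫ y, hθ θ' y ∂μ := by linarith
  refine le_trans hrle (le_csSup ?_ ⟨θ', hθ'mem, hθ'sup, rfl⟩)
  exact (hAbdd.mono hBsubA)
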